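/- If B is admissible with some ε ∈ (0,1), then μ = max{|b| : b ∈ B} satisfies μ ≥ ⌊√|Δ|/2⌋. -/

import Mathlib

noncomputable section

namespace CFNE

/-- τ = (Δ + i·√|Δ|)/2. -/
def tau (Δ : ℤ) : ℂ := ((Δ : ℂ) + Complex.I * (Real.sqrt |(Δ : ℝ)|)) / 2

/-- The imaginary quadratic order 𝒪 = ℤ[τ] of discriminant Δ, as a subring of ℂ. -/
def O (Δ : ℤ) : Subring ℂ := Subring.closure {tau Δ}

/-- A (nonzero or zero) ideal of 𝒪, presented as a subset of ℂ. -/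
structure IdealS (Δ : ℤ) where
  carrier : Set ℂ
  subset : carrier ⊆ (O Δ : Set ℂ)
  zero_mem : (0 : ℂ) ∈ carrier
  add_mem : ∀ x ∈ carrier, ∀ y ∈ carrier, x + y ∈ carrier
  neg_mem : ∀ x ∈ carrier, -x ∈ carrier
  smul_mem : ∀ r ∈ (O Δ : Set ℂ), ∀ x ∈ carrier, r * x ∈ carrier

/-- The ideal as an additive subgroup of ℂ. -/
def IdealS.toAddSubgroup {Δ : ℤ} (I : IdealS Δ) : AddSubgroup ℂ where
  carrier := I.carrier
  zero_mem' := I.zero_mem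
  add_mem' := fun hx hy => I.add_mem _ hx _ hy
  neg_mem' := fun hx => I.neg_mem _ hx

/-- The norm of an ideal: the index [𝒪 : 𝔟]. -/
def IdealS.norm {Δ : ℤ} (I : IdealS Δ) : ℕ :=
  I.toAddSubgroup.relIndex (O Δ).toAddSubgroup

/-- The ideal is nonzero. -/
def IdealS.Nonzero {Δ : ℤ} (I : IdealS Δ) : Prop := ∃ x ∈ I.carrier, x ≠ 0

/-- Two nonzero ideals lie in the same class if x·𝔞 = y·𝔟 for some nonzero x, y ∈ 𝒪. -/
def SameClass {Δ : ℤ} (I J : IdealS Δ) : Prop :=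
  ∃ x ∈ (O Δ : Set ℂ), ∃ y ∈ (O Δ : Set ℂ), x ≠ 0 ∧ y ≠ 0 ∧
    (fun t => x * t) '' I.carrier = (fun t => y * t) '' J.carrier

/-- A reduced ideal: a nonzero ideal of minimal norm in its ideal class. -/
def IsReduced {Δ : ℤ} (I : IdealS Δ) : Prop :=
  I.Nonzero ∧ ∀ J : IdealS Δ, J.Nonzero → SameClass I J → I.norm ≤ J.norm

/-- The inverse fractional ideal 𝔟⁻¹ = {x ∈ ℂ : x·𝔟 ⊆ 𝒪}. -/
def invSet {Δ : ℤ} (I : IdealS Δ) : Set ℂ :=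
  {x : ℂ | ∀ y ∈ I.carrier, x * y ∈ (O Δ : Set ℂ)}

/-- The fractional ideal a·𝔟 + b·𝔟⁻¹, as a subset of ℂ. -/
def combSet {Δ : ℤ} (I : IdealS Δ) (a b : ℂ) : Set ℂ :=
  {u : ℂ | ∃ s ∈ I.carrier, ∃ t ∈ invSet I, u = a * s + b * t}

/-- The ideal x·𝒪 + y·𝒪 of 𝒪 generated by x and y, as a subset of ℂ. -/
def genSet (Δ : ℤ) (x y : ℂ) : Set ℂ :=
  {u : ℂ | ∃ s ∈ (O Δ : Set ℂ), ∃ t ∈ (O Δ : Set ℂ), u = x * s + y * t}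

/-- The set is the carrier of a reduced ideal of 𝒪. -/
def IsReducedSet (Δ : ℤ) (S : Set ℂ) : Prop :=
  ∃ J : IdealS Δ, IsReduced J ∧ J.carrier = S

/-- B is admissible with ε ∈ (0,1): B is a nonempty finite subset of 𝒪 ∖ {0}, and for every
reduced ideal 𝔟 with 𝔟 ∩ B ≠ ∅, the discs D(a/b, ε/|b|) over b ∈ 𝔟 ∩ B, a ∈ 𝔟⁻¹ with
a·𝔟 + b·𝔟⁻¹ reduced, cover ℂ. -/
def Admissible (Δ : ℤ) (B : Set ℂ) (ε : ℝ) : Prop :=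
  B.Nonempty ∧ B.Finite ∧ B ⊆ (O Δ : Set ℂ) ∧ (0 : ℂ) ∉ B ∧
  ∀ I : IdealS Δ, IsReduced I → (I.carrier ∩ B).Nonempty →
    ∀ z : ℂ, ∃ b ∈ I.carrier ∩ B, ∃ a ∈ invSet I,
      IsReducedSet Δ (combSet I a b) ∧ ‖z - a / b‖ ≤ ε / ‖b‖

/-- μ = max{|b| : b ∈ B}. -/
def mu (B : Set ℂ) : ℝ := sSup ((fun w : ℂ => ‖w‖) '' B)

/-- A run of the continued fraction algorithm of length N ∈ ℕ ∪ {∞} on input z. -/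
structure Run (Δ : ℤ) (B : Set ℂ) (ε : ℝ) (z : ℂ) (N : ℕ∞) where
  a : ℤ → ℂ
  b : ℤ → ℂ
  p : ℤ → ℂ
  q : ℤ → ℂ
  zs : ℤ → ℂ
  b_zero : b 0 = 1
  p_neg_one : p (-1) = 0
  q_neg_one : q (-1) = 1
  p_zero : p 0 = 1
  q_zero : q 0 = 0
  zs_zero : zs 0 = z
  ha : ∀ n : ℕ, 1 ≤ n → (n : ℕ∞) ≤ N → a n ∈ O Δ
  hb : ∀ n : ℕ, 1 ≤ n → (n : ℕ∞) ≤ N → b n ∈ B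
  hne : ∀ n : ℕ, 1 ≤ n → (n : ℕ∞) ≤ N → b n * zs ((n : ℤ) - 1) - a n ≠ 0
  hclose : ∀ n : ℕ, 1 ≤ n → (n : ℕ∞) ≤ N →
    ‖b n * zs ((n : ℤ) - 1) - a n‖ ≤ ε * ‖b ((n : ℤ) - 1)‖
  hp : ∀ n : ℕ, 1 ≤ n → (n : ℕ∞) ≤ N →
    p n = (a n * p ((n : ℤ) - 1) + b n * p ((n : ℤ) - 2)) / b ((n : ℤ) - 1)
  hq : ∀ n : ℕ, 1 ≤ n → (n : ℕ∞) ≤ N →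
    q n = (a n * q ((n : ℤ) - 1) + b n * q ((n : ℤ) - 2)) / b ((n : ℤ) - 1)
  hz : ∀ n : ℕ, 1 ≤ n → (n : ℕ∞) ≤ N →
    zs n = b ((n : ℤ) - 1) / (b n * zs ((n : ℤ) - 1) - a n)
  hpO : ∀ n : ℕ, 1 ≤ n → (n : ℕ∞) ≤ N → p n ∈ O Δ
  hqO : ∀ n : ℕ, 1 ≤ n → (n : ℕ∞) ≤ N → q n ∈ O Δ
  hred : ∀ n : ℕ, 1 ≤ n → (n : ℕ∞) ≤ N → IsReducedSet Δ (genSet Δ (p n) (q n))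

section Aux
-- ===== auxiliary development =====
variable {Δ : ℤ}

lemma habs (hΔ : Δ < 0) : |(Δ:ℝ)| = -(Δ:ℝ) := abs_of_neg (by exact_mod_cast hΔ)

lemma tau_im : (tau Δ).im = Real.sqrt |(Δ:ℝ)| / 2 := by
  simp [tau, Complex.div_im, Complex.add_im, Complex.mul_im]

lemma tau_re : (tau Δ).re = (Δ:ℝ) / 2 := by
  simp [tau, Complex.div_re, Complex.add_re, Complex.mul_re]

def cInt (Δ : ℤ) : ℤ := (Δ^2 - Δ)/4

lemma cInt_eq (hΔmod : Δ % 4 = 0 ∨ Δ % 4 = 1) : 4 * cInt Δ = Δ^2 - Δ := by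
  have : (4:ℤ) ∣ Δ^2 - Δ := by
    rcases hΔmod with h | h
    · obtain ⟨k, rfl⟩ : ∃ k, Δ = 4*k := ⟨Δ/4, by omega⟩
      exact ⟨4*k^2 - k, by ring⟩
    · obtain ⟨k, rfl⟩ : ∃ k, Δ = 4*k+1 := ⟨Δ/4, by omega⟩
      exact ⟨4*k^2+k, by ring⟩
  unfold cInt; omega

lemma Isqrt_sq (hΔ : Δ < 0) :
    (Complex.I * ((Real.sqrt |(Δ:ℝ)| : ℝ) : ℂ))^2 = (Δ:ℂ) := by
  have h0 : ((Real.sqrt |(Δ:ℝ)|)^2 : ℝ) = -(Δ:ℝ) := by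
    rw [Real.sq_sqrt (abs_nonneg _), habs hΔ]
  have h1 : ((Real.sqrt |(Δ:ℝ)| : ℝ) : ℂ)^2 = -(Δ:ℂ) := by
    calc ((Real.sqrt |(Δ:ℝ)| : ℝ) : ℂ)^2
        = (((Real.sqrt |(Δ:ℝ)|)^2 : ℝ) : ℂ) := by push_cast; ring
      _ = -(Δ:ℂ) := by rw [h0]; push_cast; ring
  rw [mul_pow, Complex.I_sq, h1]; ring

lemma tau_sq (hΔ : Δ < 0) (hΔmod : Δ % 4 = 0 ∨ Δ % 4 = 1) :
    (tau Δ)^2 = (Δ:ℂ) * tau Δ - (cInt Δ : ℂ) := by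
  have h1 := Isqrt_sq hΔ
  have h2 : ((4 * cInt Δ : ℤ) : ℂ) = ((Δ^2 - Δ : ℤ) : ℂ) := by rw [cInt_eq hΔmod]
  push_cast at h2
  unfold tau
  linear_combination (h1 + h2)/4

lemma mem_O_iff (hΔ : Δ < 0) (hΔmod : Δ % 4 = 0 ∨ Δ % 4 = 1) (x : ℂ) :
    x ∈ O Δ ↔ ∃ j k : ℤ, x = (j:ℂ) + (k:ℂ) * tau Δ := by
  constructor
  · intro hx
    let S : Subring ℂ :=
      { carrier := {x : ℂ | ∃ j k : ℤ, x = (j:ℂ) + (k:ℂ) * tau Δ}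
        zero_mem' := ⟨0, 0, by push_cast; ring⟩
        one_mem' := ⟨1, 0, by push_cast; ring⟩
        add_mem' := by
          rintro a b ⟨j, k, rfl⟩ ⟨j', k', rfl⟩
          exact ⟨j + j', k + k', by push_cast; ring⟩
        neg_mem' := by
          rintro a ⟨j, k, rfl⟩
          exact ⟨-j, -k, by push_cast; ring⟩
        mul_mem' := by
          rintro a b ⟨j, k, rfl⟩ ⟨j', k', rfl⟩
          refine ⟨j*j' - k*k'*cInt Δ, j*k' + k*j' + k*k'*Δ, ?_⟩
          push_cast
          linear_combination ((k:ℂ)*(k':ℂ)) * tau_sq hΔ hΔmod }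
    have hle : O Δ ≤ S := by
      apply Subring.closure_le.mpr
      intro t ht
      rcases ht with rfl
      exact ⟨0, 1, by push_cast; ring⟩
    exact hle hx
  · rintro ⟨j, k, rfl⟩
    have ht : tau Δ ∈ O Δ := Subring.subset_closure rfl
    exact add_mem (intCast_mem _ j) (mul_mem (intCast_mem _ k) ht)

lemma conj_prod (hΔ : Δ < 0) (hΔmod : Δ % 4 = 0 ∨ Δ % 4 = 1) (j k : ℤ) :
    ((j:ℂ) + k * tau Δ) * (((j:ℂ) + k*Δ) - k * tau Δ)
      = ((j^2 + Δ*j*k + cInt Δ * k^2 : ℤ) : ℂ) := by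
  push_cast
  linear_combination (-(k:ℂ)^2) * tau_sq hΔ hΔmod

lemma conj_tau : (starRingEnd ℂ) (tau Δ) = (Δ:ℂ) - tau Δ := by
  unfold tau
  simp only [map_div₀, map_add, map_mul, Complex.conj_I, Complex.conj_ofReal,
    map_ofNat, map_intCast]
  ring

lemma normInt_ne (hΔ : Δ < 0) (hΔmod : Δ % 4 = 0 ∨ Δ % 4 = 1) (j k : ℤ)
    (hx : ((j:ℂ) + k * tau Δ) ≠ 0) : j^2 + Δ*j*k + cInt Δ * k^2 ≠ 0 := by
  intro h0
  set x : ℂ := (j:ℂ) + k * tau Δ with hxdef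
  have hc : (starRingEnd ℂ) x = ((j:ℂ) + k*Δ) - k * tau Δ := by
    rw [hxdef, map_add, map_mul, conj_tau]
    simp only [map_intCast]
    ring
  have h1 : x * (starRingEnd ℂ) x = ((j^2 + Δ*j*k + cInt Δ * k^2 : ℤ) : ℂ) := by
    rw [hc]; exact conj_prod hΔ hΔmod j k
  rw [h0] at h1
  simp only [Int.cast_zero] at h1
  rw [Complex.mul_conj] at h1
  have h2 : Complex.normSq x = 0 := by exact_mod_cast h1
  exact hx (Complex.normSq_eq_zero.mp h2)

-- coordinate functions
def kco (Δ : ℤ) (w : ℂ) : ℝ := w.im / (tau Δ).im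
def jco (Δ : ℤ) (w : ℂ) : ℝ := w.re - kco Δ w * (tau Δ).re

lemma tau_im_pos (hΔ : Δ < 0) : 0 < (tau Δ).im := by
  rw [tau_im]
  have : (0:ℝ) < |(Δ:ℝ)| := by
    rw [habs hΔ]; exact_mod_cast (by omega : (0:ℤ) < -Δ)
  positivity

lemma kco_val (hΔ : Δ < 0) (j k : ℤ) : kco Δ ((j:ℂ) + (k:ℂ) * tau Δ) = k := by
  have h := (tau_im_pos hΔ).ne'
  simp [kco, Complex.add_im, Complex.mul_im]
  field_simp

lemma jco_val (hΔ : Δ < 0) (j k : ℤ) : jco Δ ((j:ℂ) + (k:ℂ) * tau Δ) = j := by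
  rw [jco, kco_val hΔ]
  simp [Complex.add_re, Complex.mul_re]

lemma kco_add (x y : ℂ) : kco Δ (x + y) = kco Δ x + kco Δ y := by
  simp [kco, Complex.add_im, add_div]

lemma jco_add (x y : ℂ) : jco Δ (x + y) = jco Δ x + jco Δ y := by
  simp [jco, kco_add, Complex.add_re]; ring

lemma norm_ne_zero (hΔ : Δ < 0) (hΔmod : Δ % 4 = 0 ∨ Δ % 4 = 1)
    (J : IdealS Δ) (hJ : J.Nonzero) : J.norm ≠ 0 := by
  obtain ⟨x, hxJ, hx0⟩ := hJ
  have hxO := J.subset hxJ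
  obtain ⟨j, k, rfl⟩ := (mem_O_iff hΔ hΔmod x).mp hxO
  set N : ℤ := j^2 + Δ*j*k + cInt Δ * k^2 with hNdef
  have hN : N ≠ 0 := normInt_ne hΔ hΔmod j k hx0
  set cnj : ℂ := ((j:ℂ) + k*Δ) - k * tau Δ with hcnjdef
  have hcnjO : cnj ∈ O Δ := (mem_O_iff hΔ hΔmod _).mpr ⟨j + k*Δ, -k, by push_cast; ring⟩
  have hprod : cnj * ((j:ℂ) + (k:ℂ) * tau Δ) = (N:ℂ) := by
    rw [mul_comm]; exact conj_prod hΔ hΔmod j k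
  have hNJ : (N:ℂ) ∈ J.carrier := by
    have := J.smul_mem cnj hcnjO _ hxJ
    rwa [hprod] at this
  have htau : tau Δ ∈ O Δ := Subring.subset_closure rfl
  have hNtJ : (N:ℂ) * tau Δ ∈ J.carrier := by
    have := J.smul_mem (tau Δ * cnj) (mul_mem htau hcnjO) _ hxJ
    rwa [show tau Δ * cnj * ((j:ℂ) + (k:ℂ) * tau Δ) = (N:ℂ) * tau Δ by
      rw [mul_assoc, hprod]; ring] at this
  -- the subgroup generated by N and N·τ
  set H' : AddSubgroup ℂ := AddSubgroup.closure {((N:ℤ):ℂ), (N:ℂ) * tau Δ} with hH'def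
  have hH'J : H' ≤ J.toAddSubgroup := by
    rw [hH'def, AddSubgroup.closure_le]
    rintro t ht
    rcases ht with rfl | ht
    · exact hNJ
    · rcases ht with rfl
      exact hNtJ
  set K : AddSubgroup ℂ := (O Δ).toAddSubgroup with hKdef
  set n : ℕ := N.natAbs with hndef
  haveI : NeZero n := ⟨by simpa [hndef] using hN⟩
  -- the homomorphism K →+ ZMod n × ZMod n
  let ψ : K →+ ZMod n × ZMod n :=
    { toFun := fun w => ((⌊jco Δ (w:ℂ)⌋ : ZMod n), (⌊kco Δ (w:ℂ)⌋ : ZMod n))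
      map_zero' := by simp [jco, kco]
      map_add' := by
        rintro ⟨w₁, hw₁⟩ ⟨w₂, hw₂⟩
        obtain ⟨j₁, k₁, rfl⟩ := (mem_O_iff hΔ hΔmod w₁).mp hw₁
        obtain ⟨j₂, k₂, rfl⟩ := (mem_O_iff hΔ hΔmod w₂).mp hw₂
        have e1 : ((j₁:ℂ) + (k₁:ℂ) * tau Δ) + ((j₂:ℂ) + (k₂:ℂ) * tau Δ)
            = ((j₁+j₂ : ℤ):ℂ) + ((k₁+k₂:ℤ):ℂ) * tau Δ := by push_cast; ring
        simp only [AddSubgroup.coe_add, AddMemClass.mk_add_mk]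
        rw [e1, jco_val hΔ, kco_val hΔ, jco_val hΔ, kco_val hΔ, jco_val hΔ, kco_val hΔ]
        simp only [Int.floor_intCast]
        push_cast
        simp [Prod.ext_iff] }
  have hker : ψ.ker ≤ H'.addSubgroupOf K := by
    rintro ⟨w, hw⟩ hmem
    obtain ⟨j', k', rfl⟩ := (mem_O_iff hΔ hΔmod w).mp hw
    have hψ : ψ ⟨_, hw⟩ = 0 := hmem
    simp only [ψ, AddMonoidHom.coe_mk, ZeroHom.coe_mk, jco_val hΔ, kco_val hΔ,
      Int.floor_intCast, Prod.mk_eq_zero] at hψ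
    have hdj : (N:ℤ) ∣ j' := by
      have := (ZMod.intCast_zmod_eq_zero_iff_dvd j' n).mp hψ.1
      rwa [hndef, Int.natAbs_dvd] at this
    have hdk : (N:ℤ) ∣ k' := by
      have := (ZMod.intCast_zmod_eq_zero_iff_dvd k' n).mp hψ.2
      rwa [hndef, Int.natAbs_dvd] at this
    obtain ⟨a, rfl⟩ := hdj
    obtain ⟨b, rfl⟩ := hdk
    rw [AddSubgroup.mem_addSubgroupOf]
    have h1 : ((N:ℤ):ℂ) ∈ H' := AddSubgroup.subset_closure (by left; rfl)
    have h2 : (N:ℂ) * tau Δ ∈ H' := AddSubgroup.subset_closure (by right; rfl)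
    have : a • ((N:ℤ):ℂ) + b • ((N:ℂ) * tau Δ) ∈ H' :=
      AddSubgroup.add_mem _ (AddSubgroup.zsmul_mem _ h1 a) (AddSubgroup.zsmul_mem _ h2 b)
    convert this using 1
    push_cast
    simp [zsmul_eq_mul]
    ring
  have hkerindex : ψ.ker.index ≠ 0 := by
    rw [AddSubgroup.index_ker]
    have : Nonempty ψ.range := ⟨0, AddSubgroup.zero_mem _⟩
    exact Nat.card_pos.ne'
  have hH'K : H'.relIndex K ≠ 0 := by
    intro h0
    have hdvd := AddSubgroup.index_dvd_of_le hker
    rw [AddSubgroup.relIndex] at h0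
    rw [h0] at hdvd
    exact hkerindex (zero_dvd_iff.mp hdvd)
  intro h0
  have hdvd := AddSubgroup.relIndex_dvd_of_le_left K hH'J
  rw [IdealS.norm] at h0
  rw [h0] at hdvd
  exact hH'K (zero_dvd_iff.mp hdvd)

def Oideal (Δ : ℤ) : IdealS Δ where
  carrier := (O Δ : Set ℂ)
  subset := le_refl _
  zero_mem := zero_mem _
  add_mem := fun x hx y hy => add_mem hx hy
  neg_mem := fun x hx => neg_mem hx
  smul_mem := fun r hr x hx => mul_mem hr hx

lemma Oideal_norm : (Oideal Δ).norm = 1 := by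
  have he : (Oideal Δ).toAddSubgroup = (O Δ).toAddSubgroup := by
    ext x; exact Iff.rfl
  rw [IdealS.norm, he, AddSubgroup.relIndex_self]

lemma Oideal_reduced (hΔ : Δ < 0) (hΔmod : Δ % 4 = 0 ∨ Δ % 4 = 1) :
    IsReduced (Oideal Δ) := by
  refine ⟨⟨1, one_mem (O Δ), one_ne_zero⟩, fun J hJ _ => ?_⟩
  rw [Oideal_norm]
  exact Nat.one_le_iff_ne_zero.mpr (norm_ne_zero hΔ hΔmod J hJ)

end Aux

theorem stmt19 (Δ : ℤ) (hΔneg : Δ < 0) (hΔmod : Δ % 4 = 0 ∨ Δ % 4 = 1)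
    (B : Set ℂ) (ε : ℝ) (hε0 : 0 < ε) (hε1 : ε < 1) (hadm : Admissible Δ B ε) :
    ((⌊Real.sqrt |(Δ : ℝ)| / 2⌋ : ℤ) : ℝ) ≤ mu B := by
  obtain ⟨⟨b₀, hb₀⟩, hfin, hBO, h0B, hcov⟩ := hadm
  set Hr : ℝ := Real.sqrt |(Δ:ℝ)| / 2 with hHrdef
  set m : ℤ := ⌊Hr⌋ with hmdef
  have hbdd : BddAbove ((fun w : ℂ => ‖w‖) '' B) := (hfin.image _).bddAbove
  have hmu : ∀ b ∈ B, ‖b‖ ≤ mu B := fun b hb => le_csSup hbdd ⟨b, hb, rfl⟩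
  have hHr_eq : (tau Δ).im = Hr := tau_im
  have hHr0 : 0 < Hr := by rw [← hHr_eq]; exact tau_im_pos hΔneg
  by_cases hm : m ≤ 0
  · calc ((m:ℤ):ℝ) ≤ 0 := by exact_mod_cast hm
      _ ≤ ‖b₀‖ := norm_nonneg _
      _ ≤ mu B := hmu b₀ hb₀
  push_neg at hm
  have hm1 : (1:ℝ) ≤ (m:ℝ) := by exact_mod_cast hm
  have hmpos : (0:ℝ) < (m:ℝ) := by linarith
  have hmH : (m:ℝ) ≤ Hr := Int.floor_le Hr
  by_contra hcon
  push_neg at hcon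
  -- the test point
  set z : ℂ := Complex.I * ((Hr / (m:ℝ) : ℝ) : ℂ) with hzdef
  obtain ⟨b, ⟨hbO, hbB⟩, a, haInv, -, hdist⟩ :=
    hcov (Oideal Δ) (Oideal_reduced hΔneg hΔmod) ⟨b₀, hBO hb₀, hb₀⟩ z
  have hb0 : b ≠ 0 := fun h => h0B (h ▸ hbB)
  have habs0 : ‖b‖ ≠ 0 := by simpa using hb0
  have haO : a ∈ O Δ := by
    have := haInv 1 (one_mem (O Δ))
    simpa using this
  have hblt : ‖b‖ < (m:ℝ) := lt_of_le_of_lt (hmu b hbB) hcon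
  obtain ⟨j, k, hbeq⟩ := (mem_O_iff hΔneg hΔmod b).mp hbO
  -- show k = 0
  have hbim : b.im = (k:ℝ) * Hr := by
    rw [hbeq]
    simp [Complex.add_im, Complex.mul_im, hHr_eq]
  have hk0 : k = 0 := by
    by_contra hk
    have h1k : (1:ℝ) ≤ |(k:ℝ)| := by
      have : (1:ℤ) ≤ |k| := Int.one_le_abs hk
      calc (1:ℝ) ≤ ((|k|:ℤ):ℝ) := by exact_mod_cast this
        _ = |(k:ℝ)| := by push_cast; rfl
    have : Hr ≤ |b.im| := by
      rw [hbim, abs_mul, abs_of_pos hHr0]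
      nlinarith
    have h2 := Complex.abs_im_le_norm b
    linarith
  rw [hk0] at hbeq
  simp only [Int.cast_zero, zero_mul, add_zero] at hbeq
  have hj0 : j ≠ 0 := by
    intro h; apply hb0; rw [hbeq, h]; simp
  have hjlt : |j| < m := by
    have : |(j:ℝ)| < (m:ℝ) := by
      have : ‖b‖ = |(j:ℝ)| := by rw [hbeq]; simp
      linarith [this ▸ hblt]
    exact_mod_cast (by push_cast at this ⊢; exact this : ((|j|:ℤ):ℝ) < (m:ℝ))
  obtain ⟨u, v, haeq⟩ := (mem_O_iff hΔneg hΔmod a).mp haO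
  -- key bound
  have hkey : ‖b * z - a‖ ≤ ε := by
    have he : b * z - a = b * (z - a / b) := by
      rw [mul_sub, mul_comm b (a / b), div_mul_cancel₀ a hb0]
    rw [he, norm_mul]
    calc ‖b‖ * ‖z - a / b‖
        ≤ ‖b‖ * (ε / ‖b‖) :=
          mul_le_mul_of_nonneg_left hdist (norm_nonneg _)
      _ = ε := by field_simp
  -- imaginary part computation
  have him : (b * z - a).im = (j:ℝ) * (Hr / (m:ℝ)) - (v:ℝ) * Hr := by
    rw [hbeq, haeq, hzdef]
    simp [Complex.sub_im, Complex.add_im, Complex.mul_im, hHr_eq]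
  have hne : j - v * m ≠ 0 := by
    intro h
    have hj : j = v * m := by omega
    rcases eq_or_ne v 0 with rfl | hv
    · simp at hj; exact hj0 hj
    · have h1 : (1:ℤ) ≤ |v| := Int.one_le_abs hv
      have : |j| = |v| * m := by rw [hj, abs_mul, abs_of_pos (by omega : (0:ℤ) < m)]
      nlinarith [hjlt]
  have hge : (1:ℝ) ≤ |(b * z - a).im| := by
    rw [him]
    have he2 : (j:ℝ) * (Hr / (m:ℝ)) - (v:ℝ) * Hr = (Hr / (m:ℝ)) * ((j:ℝ) - (v:ℝ)*(m:ℝ)) := by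
      field_simp
    rw [he2, abs_mul, abs_of_pos (by positivity : (0:ℝ) < Hr / (m:ℝ))]
    have h1 : (1:ℝ) ≤ |(j:ℝ) - (v:ℝ)*(m:ℝ)| := by
      have : (1:ℤ) ≤ |j - v*m| := Int.one_le_abs hne
      calc (1:ℝ) ≤ ((|j - v*m|:ℤ):ℝ) := by exact_mod_cast this
        _ = |(j:ℝ) - (v:ℝ)*(m:ℝ)| := by push_cast; rfl
    have h2 : (1:ℝ) ≤ Hr / (m:ℝ) := (one_le_div hmpos).mpr hmH
    nlinarith
  have := Complex.abs_im_le_norm (b * z - a)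
  linarith


end CFNE
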